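/- arXiv:1212.1524 — 2 statements merged into one kernel-verified Lean document; each statement's English description precedes it below -/
import Mathlib

section
/- Let θ̂_I be the BOLL (maximizer of the BLM upper bound) with associated best latent marginal q̂_D, and let θ_J be any top-layer parameter. Then the loss of log-likelihood performance of (θ̂_I, θ_J) relative to the global in-model optimum (θ*_I, θ*_J) is at most KL(P_D(x) ‖ P_{θ̂_I,θ_J}(x)) − KL(P_D(x) ‖ q̂_{D,θ̂_I}(x)), where q̂_{D,θ̂_I}(x) = Σ_h P_{θ̂_I}(x|h) q̂_D(h) and P_{θ̂_I,θ_J}(x) = Σ_h P_{θ̂_I}(x|h) P_{θ_J}(h). -/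
open Finset

/-- Performance loss of (θ̂_I, θ_J) relative to the global optimum is at most
KL(P_D ‖ P_{θ̂_I,θ_J}) − KL(P_D ‖ q̂_{D,θ̂_I}). -/
theorem boll_loss_bound
    {X H ΘI ΘJ : Type} [Fintype X] [Fintype H]
    (PD : X → ℝ) (hPD0 : ∀ x, 0 ≤ PD x) (hPD1 : ∑ x : X, PD x = 1)
    (Pgen : ΘI → H → X → ℝ)
    (hgen0 : ∀ θI h x, 0 ≤ Pgen θI h x) (hgen1 : ∀ θI h, ∑ x : X, Pgen θI h x = 1)
    (Ptop : ΘJ → H → ℝ)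
    (htop0 : ∀ θJ h, 0 ≤ Ptop θJ h) (htop1 : ∀ θJ, ∑ h : H, Ptop θJ h = 1)
    (θhat : ΘI) (qhatD : H → ℝ)
    (hq0 : ∀ h, 0 ≤ qhatD h) (hq1 : ∑ h : H, qhatD h = 1)
    -- θ̂_I is the BOLL with best latent marginal q̂_D :
    (hBLM : ∀ (θI : ΘI) (Q : H → ℝ), (∀ h, 0 ≤ Q h) → (∑ h : H, Q h = 1) →
      (∑ x : X, PD x * Real.log (∑ h : H, Pgen θI h x * Q h))
        ≤ ∑ x : X, PD x * Real.log (∑ h : H, Pgen θhat h x * qhatD h))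
    (θstarI : ΘI) (θstarJ : ΘJ)
    -- (θ*_I, θ*_J) is the global in-model optimum :
    (hstar : ∀ (θI : ΘI) (θJ : ΘJ),
      (∑ x : X, PD x * Real.log (∑ h : H, Pgen θI h x * Ptop θJ h))
        ≤ ∑ x : X, PD x * Real.log (∑ h : H, Pgen θstarI h x * Ptop θstarJ h))
    (θJ : ΘJ)
    -- positivity so that KL divergences are finite :
    (hpos1 : ∀ x, PD x ≠ 0 → 0 < ∑ h : H, Pgen θhat h x * Ptop θJ h)
    (hpos3 : ∀ x, PD x ≠ 0 → 0 < ∑ h : H, Pgen θhat h x * qhatD h) :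
    (∑ x : X, PD x * Real.log (∑ h : H, Pgen θstarI h x * Ptop θstarJ h))
      - (∑ x : X, PD x * Real.log (∑ h : H, Pgen θhat h x * Ptop θJ h))
      ≤
    (∑ x : X, PD x * Real.log (PD x / (∑ h : H, Pgen θhat h x * Ptop θJ h)))
      - (∑ x : X, PD x * Real.log (PD x / (∑ h : H, Pgen θhat h x * qhatD h))) := by
  have key : (∑ x : X, PD x * Real.log (∑ h : H, Pgen θstarI h x * Ptop θstarJ h))
      ≤ ∑ x : X, PD x * Real.log (∑ h : H, Pgen θhat h x * qhatD h) :=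
    hBLM θstarI (Ptop θstarJ) (htop0 θstarJ) (htop1 θstarJ)
  have split : ∀ (A : X → ℝ), (∀ x, PD x ≠ 0 → 0 < A x) →
      ∑ x : X, PD x * Real.log (PD x / A x)
        = ∑ x : X, PD x * Real.log (PD x) - ∑ x : X, PD x * Real.log (A x) := by
    intro A hA
    rw [← Finset.sum_sub_distrib]
    apply Finset.sum_congr rfl
    intro x _
    by_cases h : PD x = 0
    · simp [h]
    · rw [Real.log_div h (ne_of_gt (hA x h))]; ring
  rw [split _ hpos1, split _ hpos3]
  linarith
end

section
/- Combining the two bounds of Proposition 6: for the BOLL θ̂_I with BLM q̂_D (a fixed point of data incorporation), and any top-layer distribution P_{θ_J}(h), the global performance gap satisfies E_{x~P_D}[log P_{θ*_I,θ*_J}(x)] − E_{x~P_D}[log P_{θ̂_I,θ_J}(x)] ≤ KL(q̂_D(h) ‖ P_{θ_J}(h)). -/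
open Finset

/-- Per-point Jensen/Gibbs step: the log-likelihood gap between mixtures with
mixing weights `q` and `P` is bounded by a posterior-weighted log ratio. -/
lemma jensen_step {H : Type} [Fintype H] (a q P : H → ℝ)
    (ha : ∀ h, 0 ≤ a h) (hq0 : ∀ h, 0 ≤ q h) (hP0 : ∀ h, 0 ≤ P h)
    (hsupp : ∀ h, 0 < q h → 0 < P h)
    (hSq : 0 < ∑ h : H, a h * q h) (hSJ : 0 < ∑ h : H, a h * P h) :
    Real.log (∑ h : H, a h * q h) - Real.log (∑ h : H, a h * P h)
      ≤ ∑ h : H, (a h * q h / ∑ h' : H, a h' * q h') * Real.log (q h / P h) := by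
  set Sq := ∑ h : H, a h * q h with hSqdef
  set SJ := ∑ h : H, a h * P h with hSJdef
  have hp1 : ∑ h : H, a h * q h / Sq = 1 := by
    rw [← Finset.sum_div]; exact div_self hSq.ne'
  have hu1 : ∑ h : H, a h * P h / SJ = 1 := by
    rw [← Finset.sum_div]; exact div_self hSJ.ne'
  have key : ∀ h : H, (a h * q h / Sq) * (Real.log Sq - Real.log SJ)
      ≤ (a h * q h / Sq) * Real.log (q h / P h)
        - (a h * q h / Sq - a h * P h / SJ) := by
    intro h
    by_cases hz : a h * q h = 0
    · rw [hz]
      simp only [zero_div, zero_mul, zero_sub, sub_zero]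
      have : 0 ≤ a h * P h / SJ := div_nonneg (mul_nonneg (ha h) (hP0 h)) hSJ.le
      linarith
    · have haq : 0 < a h * q h :=
        lt_of_le_of_ne (mul_nonneg (ha h) (hq0 h)) (Ne.symm hz)
      have hah : 0 < a h := by
        by_contra hc; push_neg at hc; nlinarith [hq0 h]
      have hqh : 0 < q h := by
        by_contra hc; push_neg at hc; nlinarith [ha h]
      have hPh : 0 < P h := hsupp h hqh
      have hp : 0 < a h * q h / Sq := div_pos haq hSq
      have hu : 0 < a h * P h / SJ := div_pos (mul_pos hah hPh) hSJ
      set p := a h * q h / Sq with hpdef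
      set u := a h * P h / SJ with hudef
      have hup : u / p = (P h * Sq) / (q h * SJ) := by
        rw [hudef, hpdef]; field_simp
      have e1 : Real.log (u / p)
          = Real.log (P h) + Real.log Sq - (Real.log (q h) + Real.log SJ) := by
        rw [hup, Real.log_div (by positivity) (by positivity),
          Real.log_mul hPh.ne' hSq.ne', Real.log_mul hqh.ne' hSJ.ne']
      have hlog : Real.log (u / p) ≤ u / p - 1 :=
        Real.log_le_sub_one_of_pos (div_pos hu hp)
      have h2 : p * Real.log (u / p) ≤ u - p := by
        have := mul_le_mul_of_nonneg_left hlog hp.le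
        calc p * Real.log (u / p) ≤ p * (u / p - 1) := this
          _ = u - p := by field_simp
      rw [e1] at h2
      have e2 : Real.log (q h / P h) = Real.log (q h) - Real.log (P h) :=
        Real.log_div hqh.ne' hPh.ne'
      rw [e2]
      nlinarith [h2]
  calc Real.log Sq - Real.log SJ
      = ∑ h : H, (a h * q h / Sq) * (Real.log Sq - Real.log SJ) := by
        rw [← Finset.sum_mul, hp1, one_mul]
    _ ≤ ∑ h : H, ((a h * q h / Sq) * Real.log (q h / P h)
          - (a h * q h / Sq - a h * P h / SJ)) :=
        Finset.sum_le_sum fun h _ => key h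
    _ = ∑ h : H, (a h * q h / Sq) * Real.log (q h / P h) := by
        rw [Finset.sum_sub_distrib, Finset.sum_sub_distrib, hp1, hu1]; ring

/-- Global performance gap of (θ̂_I, θ_J) relative to the global optimum is at most
KL(q̂_D ‖ P_{θ_J}). -/
theorem boll_loss_bound_KL
    {X H ΘI ΘJ : Type} [Fintype X] [Fintype H]
    (PD : X → ℝ) (hPD0 : ∀ x, 0 ≤ PD x) (hPD1 : ∑ x : X, PD x = 1)
    (Pgen : ΘI → H → X → ℝ)
    (hgen0 : ∀ θI h x, 0 ≤ Pgen θI h x) (hgen1 : ∀ θI h, ∑ x : X, Pgen θI h x = 1)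
    (Ptop : ΘJ → H → ℝ)
    (htop0 : ∀ θJ h, 0 ≤ Ptop θJ h) (htop1 : ∀ θJ, ∑ h : H, Ptop θJ h = 1)
    (θhat : ΘI) (qhatD : H → ℝ)
    (hq0 : ∀ h, 0 ≤ qhatD h) (hq1 : ∑ h : H, qhatD h = 1)
    -- θ̂_I is the BOLL with best latent marginal q̂_D :
    (hBLM : ∀ (θI : ΘI) (Q : H → ℝ), (∀ h, 0 ≤ Q h) → (∑ h : H, Q h = 1) →
      (∑ x : X, PD x * Real.log (∑ h : H, Pgen θI h x * Q h))
        ≤ ∑ x : X, PD x * Real.log (∑ h : H, Pgen θhat h x * qhatD h))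
    -- q̂_D is a fixed point of data incorporation for θ̂_I :
    (hfix : ∀ h, qhatD h =
      ∑ x : X, (Pgen θhat h x * qhatD h / (∑ h' : H, Pgen θhat h' x * qhatD h'))
          * PD x)
    (θstarI : ΘI) (θstarJ : ΘJ)
    (hstar : ∀ (θI : ΘI) (θJ : ΘJ),
      (∑ x : X, PD x * Real.log (∑ h : H, Pgen θI h x * Ptop θJ h))
        ≤ ∑ x : X, PD x * Real.log (∑ h : H, Pgen θstarI h x * Ptop θstarJ h))
    (θJ : ΘJ)
    (hsupp : ∀ h, 0 < qhatD h → 0 < Ptop θJ h)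
    (hpos1 : ∀ x, PD x ≠ 0 → 0 < ∑ h : H, Pgen θhat h x * Ptop θJ h)
    (hpos3 : ∀ x, PD x ≠ 0 → 0 < ∑ h : H, Pgen θhat h x * qhatD h) :
    (∑ x : X, PD x * Real.log (∑ h : H, Pgen θstarI h x * Ptop θstarJ h))
      - (∑ x : X, PD x * Real.log (∑ h : H, Pgen θhat h x * Ptop θJ h))
      ≤
    ∑ h : H, qhatD h * Real.log (qhatD h / Ptop θJ h) := by
  -- Step 1: the global optimum is at most the BOLL value with BLM q̂_D.
  have h1 : (∑ x : X, PD x * Real.log (∑ h : H, Pgen θstarI h x * Ptop θstarJ h))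
      ≤ ∑ x : X, PD x * Real.log (∑ h : H, Pgen θhat h x * qhatD h) :=
    hBLM θstarI (Ptop θstarJ) (htop0 θstarJ) (htop1 θstarJ)
  -- Step 2: pointwise Jensen bound, then sum.
  have h2 : ∑ x : X, PD x * (Real.log (∑ h : H, Pgen θhat h x * qhatD h)
        - Real.log (∑ h : H, Pgen θhat h x * Ptop θJ h))
      ≤ ∑ x : X, PD x * ∑ h : H,
          (Pgen θhat h x * qhatD h / (∑ h' : H, Pgen θhat h' x * qhatD h'))
            * Real.log (qhatD h / Ptop θJ h) := by
    apply Finset.sum_le_sum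
    intro x _
    by_cases hx : PD x = 0
    · rw [hx]; simp
    · exact mul_le_mul_of_nonneg_left
        (jensen_step (fun h => Pgen θhat h x) qhatD (Ptop θJ)
          (fun h => hgen0 θhat h x) hq0 (htop0 θJ) hsupp (hpos3 x hx) (hpos1 x hx))
        (hPD0 x)
  -- Step 3: swap sums and use the fixed-point property.
  have h3 : (∑ x : X, PD x * ∑ h : H,
        (Pgen θhat h x * qhatD h / (∑ h' : H, Pgen θhat h' x * qhatD h'))
          * Real.log (qhatD h / Ptop θJ h))
      = ∑ h : H, qhatD h * Real.log (qhatD h / Ptop θJ h) := by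
    have : ∀ x : X, PD x * ∑ h : H,
          (Pgen θhat h x * qhatD h / (∑ h' : H, Pgen θhat h' x * qhatD h'))
            * Real.log (qhatD h / Ptop θJ h)
        = ∑ h : H, ((Pgen θhat h x * qhatD h / (∑ h' : H, Pgen θhat h' x * qhatD h'))
            * PD x) * Real.log (qhatD h / Ptop θJ h) := by
      intro x; rw [Finset.mul_sum]; apply Finset.sum_congr rfl; intro h _; ring
    rw [Finset.sum_congr rfl (fun x _ => this x), Finset.sum_comm]
    apply Finset.sum_congr rfl
    intro h _
    rw [← Finset.sum_mul, ← hfix h]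
  have h4 : ∑ x : X, PD x * (Real.log (∑ h : H, Pgen θhat h x * qhatD h)
        - Real.log (∑ h : H, Pgen θhat h x * Ptop θJ h))
      = (∑ x : X, PD x * Real.log (∑ h : H, Pgen θhat h x * qhatD h))
        - ∑ x : X, PD x * Real.log (∑ h : H, Pgen θhat h x * Ptop θJ h) := by
    rw [← Finset.sum_sub_distrib]; apply Finset.sum_congr rfl; intro x _; ring
  rw [h3, h4] at h2
  linarith
end
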